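/- Let θ : ℝ → ℝ be continuously differentiable with sin θ(s) ≠ 0 for all s, and let m : ℝ → ℝ be twice differentiable satisfying sin θ(s)·m''(s) = θ'(s)·cos θ(s)·m'(s) for all s. Then there exist constants c₁, c₂ ∈ ℝ such that m(s) = c₁·∫_{s₀}^{s} sin θ(τ) dτ + c₂ for all s ∈ ℝ (where s₀ ∈ ℝ is any fixed basepoint). -/

import Mathlib

/-- Let `θ : ℝ → ℝ` be continuously differentiable with `sin (θ s) ≠ 0` for
all `s`, and let `m : ℝ → ℝ` be twice differentiable satisfying
`sin (θ s) * m'' s = θ' s * cos (θ s) * m' s` for all `s`. Then there exist constants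
`c₁, c₂ ∈ ℝ` such that `m s = c₁ * ∫_{s₀}^{s} sin (θ τ) dτ + c₂` for all `s ∈ ℝ`,
where `s₀` is any fixed basepoint. -/
theorem stmt_1 (θ m : ℝ → ℝ) (s₀ : ℝ)
    (hθ : ContDiff ℝ 1 θ) (hsin : ∀ s, Real.sin (θ s) ≠ 0)
    (hm : Differentiable ℝ m) (hm' : Differentiable ℝ (deriv m))
    (hode : ∀ s, Real.sin (θ s) * deriv (deriv m) s
      = deriv θ s * Real.cos (θ s) * deriv m s) :
    ∃ c₁ c₂ : ℝ, ∀ s, m s = c₁ * (∫ τ in s₀..s, Real.sin (θ τ)) + c₂ := by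
  have hθd : Differentiable ℝ θ := hθ.differentiable one_ne_zero
  set g : ℝ → ℝ := fun s => deriv m s / Real.sin (θ s) with hg
  have hsinD : ∀ s, HasDerivAt (fun s => Real.sin (θ s))
      (Real.cos (θ s) * deriv θ s) s := fun s =>
    (Real.hasDerivAt_sin (θ s)).comp s (hθd s).hasDerivAt
  have hgd : ∀ s, HasDerivAt g 0 s := by
    intro s
    have h := ((hm' s).hasDerivAt).div (hsinD s) (hsin s)
    have hz : (deriv (deriv m) s * Real.sin (θ s)
        - deriv m s * (Real.cos (θ s) * deriv θ s)) / Real.sin (θ s) ^ 2 = 0 := by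
      rw [div_eq_iff (pow_ne_zero 2 (hsin s)), zero_mul]
      linear_combination hode s
    rwa [hz] at h
  have hgc : ∀ s, g s = g s₀ := by
    intro s
    exact is_const_of_deriv_eq_zero (fun x => (hgd x).differentiableAt)
      (fun x => (hgd x).deriv) s s₀
  set c₁ := g s₀ with hc₁
  have hm'eq : ∀ s, deriv m s = c₁ * Real.sin (θ s) := by
    intro s
    have := hgc s
    simp only [hg] at this
    rw [div_eq_iff (hsin s)] at this
    linarith
  have hcont : Continuous fun τ => Real.sin (θ τ) :=
    Real.continuous_sin.comp hθd.continuous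
  set F : ℝ → ℝ := fun s => c₁ * ∫ τ in s₀..s, Real.sin (θ τ) with hF
  have hFd : ∀ s, HasDerivAt F (c₁ * Real.sin (θ s)) s := by
    intro s
    have : HasDerivAt (fun s => ∫ τ in s₀..s, Real.sin (θ τ)) (Real.sin (θ s)) s :=
      intervalIntegral.integral_hasDerivAt_right
        (hcont.intervalIntegrable _ _)
        (hcont.stronglyMeasurableAtFilter _ _)
        hcont.continuousAt
    exact this.const_mul c₁
  set h : ℝ → ℝ := fun s => m s - F s with hh
  have hhd : ∀ s, HasDerivAt h 0 s := by
    intro s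
    have := (hm s).hasDerivAt.sub (hFd s)
    rwa [hm'eq s, sub_self] at this
  refine ⟨c₁, m s₀, fun s => ?_⟩
  have hc : h s = h s₀ :=
    is_const_of_deriv_eq_zero (fun x => (hhd x).differentiableAt)
      (fun x => (hhd x).deriv) s s₀
  simp only [hh, hF, intervalIntegral.integral_same, mul_zero, sub_zero] at hc
  linarith
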